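/- Let X be a normed space, let ψ be a norm-one functional on X attaining its norm at a point x of the unit sphere, and for δ > 0 let S(x,ψ,δ) = {y in the closed unit ball of X : ψ(y) > 1 − δ}. Then for all δ > 0 and ε > 0, one has diam(S(x,ψ,δ+ε)) ≤ (1 + ε/δ)·diam(S(x,ψ,δ)). -/

import Mathlib

open Metric Set

theorem slice_diam_scaling {X : Type*} [NormedAddCommGroup X] [NormedSpace ℝ X]
    (ψ : X →L[ℝ] ℝ) (x : X) (hψ : ‖ψ‖ = 1) (hx : ‖x‖ = 1) (hψx : ψ x = 1)
    (δ ε : ℝ) (hδ : 0 < δ) (hε : 0 < ε) :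
    Metric.diam {y : X | ‖y‖ ≤ 1 ∧ 1 - (δ + ε) < ψ y} ≤
      (1 + ε / δ) * Metric.diam {y : X | ‖y‖ ≤ 1 ∧ 1 - δ < ψ y} := by
  set l : ℝ := ε / (δ + ε) with hl
  have hδε : 0 < δ + ε := by linarith
  have hl0 : 0 < l := div_pos hε hδε
  have hl1 : 1 - l = δ / (δ + ε) := by rw [hl]; field_simp; ring
  have hl1pos : 0 < 1 - l := by rw [hl1]; positivity
  have hbdd : Bornology.IsBounded {y : X | ‖y‖ ≤ 1 ∧ 1 - δ < ψ y} := by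
    apply (Metric.isBounded_closedBall (x := (0:X)) (r := 1)).subset
    intro y hy
    simpa [Metric.mem_closedBall, dist_zero_right] using hy.1
  have key : ∀ y : X, ‖y‖ ≤ 1 → 1 - (δ + ε) < ψ y →
      (l • x + (1 - l) • y) ∈ {y : X | ‖y‖ ≤ 1 ∧ 1 - δ < ψ y} := by
    intro y hy hψy
    have hprod : (1 - l) * (δ + ε) = δ := by
      rw [hl1]; field_simp
    constructor
    · calc ‖l • x + (1 - l) • y‖ ≤ ‖l • x‖ + ‖(1 - l) • y‖ := norm_add_le _ _
        _ = l * ‖x‖ + (1 - l) * ‖y‖ := by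
            rw [norm_smul, norm_smul, Real.norm_of_nonneg hl0.le,
              Real.norm_of_nonneg hl1pos.le]
        _ ≤ l * 1 + (1 - l) * 1 := by
            gcongr
            · exact hx.le
        _ = 1 := by ring
    · have hz : ψ (l • x + (1 - l) • y) = l + (1 - l) * ψ y := by
        simp [map_add, map_smul, hψx]
      rw [hz]
      nlinarith [mul_lt_mul_of_pos_left hψy hl1pos]
  apply Metric.diam_le_of_forall_dist_le (by positivity)
  intro y₁ h₁ y₂ h₂
  obtain ⟨hn₁, hs₁⟩ := h₁
  obtain ⟨hn₂, hs₂⟩ := h₂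
  have hz₁ := key y₁ hn₁ hs₁
  have hz₂ := key y₂ hn₂ hs₂
  have hdist : dist (l • x + (1 - l) • y₁) (l • x + (1 - l) • y₂)
      = (1 - l) * dist y₁ y₂ := by
    rw [dist_eq_norm, dist_eq_norm]
    have : (l • x + (1 - l) • y₁) - (l • x + (1 - l) • y₂) = (1 - l) • (y₁ - y₂) := by
      module
    rw [this, norm_smul, Real.norm_of_nonneg hl1pos.le]
  have hle := Metric.dist_le_diam_of_mem hbdd hz₁ hz₂
  rw [hdist] at hle
  have hprod : (1 - l) * (1 + ε / δ) = 1 := by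
    rw [hl1]; field_simp
  have hfac : (0:ℝ) ≤ 1 + ε / δ := by positivity
  nlinarith [dist_nonneg (x := y₁) (y := y₂),
    Metric.diam_nonneg (s := {y : X | ‖y‖ ≤ 1 ∧ 1 - δ < ψ y})]
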